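/- Let X be an abelian surface with NS(X) = ℤH and (H²)/2 = n, and let ℓ be a positive integer with √(ℓn) ∉ ℤ. Identify Mukai vectors (r, dH, a) with matrices [[r, d√n],[d√n, a]]. Then for two positive isotropic Mukai vectors w₀, w₁, the conditions (1,0,−ℓ) = ±(ℓw₀ − w₁) and ⟨w₀,w₁⟩ = −1 hold if and only if there exist p, q with P(p,q) ∈ S_{n,ℓ} such that w₀ = (p², −(pq/√n)H, q²) and w₁ = (q², −(ℓpq/√n)H, ℓ²p²). -/

import Mathlib

/-- The set `S_{n,ℓ}` of matrices `P(x,y) = [[y, ℓx],[x, y]]` with `x = a√r`, `y = b√s`,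
`a, b ∈ ℤ`, `r, s ∈ ℤ_{>0}`, `rs = n`, and `y² − ℓx² = ±1`. -/
def Sset (n ℓ : ℕ) : Set (Matrix (Fin 2) (Fin 2) ℝ) :=
  {M | ∃ (a b : ℤ) (r s : ℕ), 0 < r ∧ 0 < s ∧ r * s = n ∧
    M = !![(b : ℝ) * Real.sqrt s, (ℓ : ℝ) * ((a : ℝ) * Real.sqrt r);
           (a : ℝ) * Real.sqrt r, (b : ℝ) * Real.sqrt s] ∧
    (((b : ℝ) * Real.sqrt s) ^ 2 - (ℓ : ℝ) * ((a : ℝ) * Real.sqrt r) ^ 2 = 1 ∨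
     ((b : ℝ) * Real.sqrt s) ^ 2 - (ℓ : ℝ) * ((a : ℝ) * Real.sqrt r) ^ 2 = -1)}

/-- A Mukai vector `(r, dH, a)` on an abelian surface with `NS(X) = ℤH`, `(H²)/2 = n`
is encoded as a triple `(r, d, a) ∈ ℤ³`.  The Mukai pairing is
`⟨x, y⟩ = 2n x₁ y₁ − x₀ y₂ − x₂ y₀`. -/
def mukaiPairing (n : ℕ) (x y : ℤ × ℤ × ℤ) : ℤ :=
  2 * n * x.2.1 * y.2.1 - x.1 * y.2.2 - x.2.2 * y.1

/-- A Mukai vector is isotropic if `⟨v, v⟩ = 0`. -/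
def MukaiIsotropic (n : ℕ) (v : ℤ × ℤ × ℤ) : Prop := mukaiPairing n v v = 0

/-- Positivity of a Mukai vector `(r, dH, a)`. -/
def MukaiPos (v : ℤ × ℤ × ℤ) : Prop :=
  0 < v.1 ∨ (v.1 = 0 ∧ 0 < v.2.1) ∨ (v.1 = 0 ∧ v.2.1 = 0 ∧ 0 < v.2.2)

lemma key_nt (x y d n : ℕ) (hn : 0 < n) (hx : 0 < x) (hd : 0 < d)
    (hcop : Nat.Coprime x y) (h : x * y = n * d ^ 2) :
    ∃ u w r s : ℕ, 0 < r ∧ 0 < s ∧ r * s = n ∧ x = u ^ 2 * r ∧ y = w ^ 2 * s ∧ u * w = d := by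
  have hy : 0 < y := by nlinarith [pow_pos hd 2, h]
  set u := Nat.gcd x d with hu
  set w := Nat.gcd y d with hw
  have hdxy : d ∣ x * y := h ▸ Dvd.dvd.mul_left (dvd_pow_self d two_ne_zero) n
  have hd2xy : d ^ 2 ∣ x * y := h ▸ Dvd.dvd.mul_left dvd_rfl n
  have hcuw : Nat.Coprime u w :=
    Nat.Coprime.coprime_dvd_right (Nat.gcd_dvd_left y d)
      (Nat.Coprime.coprime_dvd_left (Nat.gcd_dvd_left x d) hcop)
  have huw : u * w = d := by
    have h1 : u * w ∣ d :=
      Nat.Coprime.mul_dvd_of_dvd_of_dvd hcuw (Nat.gcd_dvd_right x d) (Nat.gcd_dvd_right y d)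
    have h2 : d ∣ u * w := by
      have h3 := Nat.gcd_mul_right_dvd_mul_gcd d x y
      rwa [Nat.gcd_eq_left hdxy, Nat.gcd_comm d x, Nat.gcd_comm d y] at h3
    exact Nat.dvd_antisymm h1 h2
  have hu2x : u ^ 2 ∣ x := by
    have h1 : u ^ 2 ∣ x * y :=
      dvd_trans (pow_dvd_pow_of_dvd (Nat.gcd_dvd_right x d) 2) hd2xy
    exact (Nat.Coprime.pow_left 2 (Nat.Coprime.coprime_dvd_left (Nat.gcd_dvd_left x d) hcop)).dvd_of_dvd_mul_right h1
  have hw2y : w ^ 2 ∣ y := by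
    have h1 : w ^ 2 ∣ x * y :=
      dvd_trans (pow_dvd_pow_of_dvd (Nat.gcd_dvd_right y d) 2) hd2xy
    exact (Nat.Coprime.pow_left 2 (Nat.Coprime.coprime_dvd_left (Nat.gcd_dvd_left y d) hcop.symm)).dvd_of_dvd_mul_left h1
  refine ⟨u, w, x / u ^ 2, y / w ^ 2, ?_, ?_, ?_, (Nat.mul_div_cancel' hu2x).symm,
    (Nat.mul_div_cancel' hw2y).symm, huw⟩
  · have := Nat.mul_div_cancel' hu2x
    rcases Nat.eq_zero_or_pos (x / u ^ 2) with h0 | h0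
    · rw [h0, mul_zero] at this; omega
    · exact h0
  · have := Nat.mul_div_cancel' hw2y
    rcases Nat.eq_zero_or_pos (y / w ^ 2) with h0 | h0
    · rw [h0, mul_zero] at this; omega
    · exact h0
  · have hx' := Nat.mul_div_cancel' hu2x
    have hy' := Nat.mul_div_cancel' hw2y
    have hdpos : 0 < u * w := huw ▸ hd
    have key : (u * w) ^ 2 * (x / u ^ 2 * (y / w ^ 2)) = (u * w) ^ 2 * n := by
      calc (u * w) ^ 2 * (x / u ^ 2 * (y / w ^ 2))
          = (u ^ 2 * (x / u ^ 2)) * (w ^ 2 * (y / w ^ 2)) := by ring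
        _ = x * y := by rw [hx', hy']
        _ = n * d ^ 2 := h
        _ = (u * w) ^ 2 * n := by rw [huw]; ring
    exact Nat.eq_of_mul_eq_mul_left (by positivity) key

set_option maxHeartbeats 1000000 in
/-- for positive isotropic Mukai vectors `w₀, w₁`, the conditions
`(1,0,−ℓ) = ±(ℓw₀ − w₁)` and `⟨w₀, w₁⟩ = −1` hold if and only if there are `p, q`
with `P(p,q) ∈ S_{n,ℓ}` such that `w₀ = (p², −(pq/√n)H, q²)` and
`w₁ = (q², −(ℓpq/√n)H, ℓ²p²)`. -/
theorem numerical_solution_iff (n ℓ : ℕ) (hn : 0 < n) (hℓ : 0 < ℓ)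
    (hirr : ¬∃ m : ℕ, m * m = ℓ * n) (w₀ w₁ : ℤ × ℤ × ℤ) :
    (MukaiPos w₀ ∧ MukaiPos w₁ ∧ MukaiIsotropic n w₀ ∧ MukaiIsotropic n w₁ ∧
      mukaiPairing n w₀ w₁ = -1 ∧
      (((1, 0, -(ℓ : ℤ)) : ℤ × ℤ × ℤ) = (ℓ : ℤ) • w₀ - w₁ ∨
       ((1, 0, -(ℓ : ℤ)) : ℤ × ℤ × ℤ) = -((ℓ : ℤ) • w₀ - w₁)))
    ↔
    (∃ p q : ℝ, !![q, (ℓ : ℝ) * p; p, q] ∈ Sset n ℓ ∧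
      (w₀.1 : ℝ) = p ^ 2 ∧ (w₀.2.1 : ℝ) = -(p * q) / Real.sqrt n ∧
      (w₀.2.2 : ℝ) = q ^ 2 ∧
      (w₁.1 : ℝ) = q ^ 2 ∧ (w₁.2.1 : ℝ) = -((ℓ : ℝ) * (p * q)) / Real.sqrt n ∧
      (w₁.2.2 : ℝ) = (ℓ : ℝ) ^ 2 * p ^ 2) := by

  obtain ⟨R, D, A⟩ := w₀
  obtain ⟨R₁, D₁, A₁⟩ := w₁
  have hnR : (0:ℝ) < (n:ℝ) := by exact_mod_cast hn
  have hsn : Real.sqrt n ≠ 0 := by positivity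
  have hnZ : (0:ℤ) < (n:ℤ) := by exact_mod_cast hn
  have hlZ : (0:ℤ) < (ℓ:ℤ) := by exact_mod_cast hℓ
  constructor
  · rintro ⟨hpos₀, hpos₁, hiso₀, hiso₁, hpair, hvec⟩
    simp only [MukaiIsotropic, mukaiPairing] at hiso₀ hiso₁ hpair
    simp only [MukaiPos] at hpos₀ hpos₁
    simp only [Prod.smul_mk, smul_eq_mul, Prod.mk_sub_mk, Prod.neg_mk, Prod.mk.injEq] at hvec
    -- extract the structure of w₁ and the key ±1 equation
    obtain ⟨hR₁, hD₁, hA₁, hE⟩ :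
        R₁ = A ∧ D₁ = (ℓ:ℤ) * D ∧ A₁ = (ℓ:ℤ)^2 * R ∧
          (A - (ℓ:ℤ) * R = 1 ∨ A - (ℓ:ℤ) * R = -1) := by
      rcases hvec with ⟨h1, h2, h3⟩ | ⟨h1, h2, h3⟩
      · have hD₁ : D₁ = (ℓ:ℤ) * D := by linarith
        have hR₁' : R₁ = (ℓ:ℤ) * R - 1 := by linarith
        have hA₁' : A₁ = (ℓ:ℤ) * A + (ℓ:ℤ) := by linarith
        rw [hD₁, hR₁', hA₁'] at hpair
        have hkey : A - (ℓ:ℤ) * R = -1 := by linear_combination hpair - (ℓ:ℤ) * hiso₀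
        refine ⟨by linarith, hD₁, by linear_combination hA₁' + (ℓ:ℤ) * hkey, Or.inr hkey⟩
      · have hD₁ : D₁ = (ℓ:ℤ) * D := by linarith
        have hR₁' : R₁ = (ℓ:ℤ) * R + 1 := by linarith
        have hA₁' : A₁ = (ℓ:ℤ) * A - (ℓ:ℤ) := by linarith
        rw [hD₁, hR₁', hA₁'] at hpair
        have hkey : A - (ℓ:ℤ) * R = 1 := by linear_combination (ℓ:ℤ) * hiso₀ - hpair
        refine ⟨by linarith, hD₁, by linear_combination hA₁' + (ℓ:ℤ) * hkey, Or.inl hkey⟩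
    have hiso : R * A = (n:ℤ) * D ^ 2 := by
      have h2 : 2 * (R * A) = 2 * ((n:ℤ) * D ^ 2) := by linear_combination -hiso₀
      exact mul_left_cancel₀ two_ne_zero h2
    -- nonnegativity
    have hR0 : 0 ≤ R := by
      rcases hpos₀ with h | ⟨h, _⟩ | ⟨h, _, _⟩
      · linarith
      · omega
      · omega
    have hA0 : 0 ≤ A := by
      rcases hpos₀ with h | ⟨h, hD2⟩ | ⟨h, hD2, hA2⟩
      · nlinarith [sq_nonneg D]
      · exfalso; rw [h] at hiso; nlinarith
      · linarith
    by_cases hRz : R = 0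
    · -- w₀ = (0, 0, 1), w₁ = (1, 0, 0)
      have hDz : D = 0 := by
        have h1 : (n:ℤ) * D ^ 2 = 0 := by rw [← hiso, hRz, zero_mul]
        have h2 : D ^ 2 = 0 := by
          rcases mul_eq_zero.mp h1 with h | h
          · exact absurd h (by positivity)
          · exact h
        exact pow_eq_zero_iff two_ne_zero |>.mp h2
      have hAz : A = 1 := by
        have hA2 : 0 < A := by
          rcases hpos₀ with h | ⟨_, hD2⟩ | ⟨_, _, hA2⟩
          · omega
          · omega
          · exact hA2
        rcases hE with h | h <;> (rw [hRz, mul_zero] at h) <;> omega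
      refine ⟨0, 1, ⟨0, 1, n, 1, hn, one_pos, mul_one n, ?_, Or.inl (by norm_num)⟩, ?_⟩
      · ext i j
        fin_cases i <;> fin_cases j <;> norm_num
      · rw [hRz, hDz, hAz, hR₁, hD₁, hA₁]
        norm_num [hRz, hDz, hAz]
    · have hRpos : 0 < R := lt_of_le_of_ne hR0 (Ne.symm hRz)
      by_cases hAz : A = 0
      · -- ℓ = 1, w₀ = (1,0,0), w₁ = (0,0,1)
        have hDz : D = 0 := by
          have h1 : (n:ℤ) * D ^ 2 = 0 := by rw [← hiso, hAz, mul_zero]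
          have h2 : D ^ 2 = 0 := by
            rcases mul_eq_zero.mp h1 with h | h
            · exact absurd h (by positivity)
            · exact h
          exact pow_eq_zero_iff two_ne_zero |>.mp h2
        have hlR : (ℓ:ℤ) * R = 1 := by
          rcases hE with h | h
          · exfalso; nlinarith
          · linarith
        have hl1 : (ℓ:ℤ) = 1 := by nlinarith
        have hR1 : R = 1 := by nlinarith
        have hl1' : ℓ = 1 := by exact_mod_cast hl1
        refine ⟨1, 0, ⟨1, 0, 1, n, one_pos, hn, one_mul n, ?_, Or.inr (by
          norm_num [hl1'])⟩, ?_⟩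
        · ext i j
          fin_cases i <;> fin_cases j <;> norm_num
        · rw [hR1, hDz, hAz, hR₁, hD₁, hA₁]
          norm_num [hR1, hDz, hAz, hl1']
      · -- main case : R > 0 and A > 0
        have hApos : 0 < A := lt_of_le_of_ne hA0 (Ne.symm hAz)
        set x := R.toNat with hxdef
        set y := A.toNat with hydef
        set d := D.natAbs with hddef
        have hxR : (x:ℤ) = R := Int.toNat_of_nonneg hR0
        have hyA : (y:ℤ) = A := Int.toNat_of_nonneg hA0
        have hdD : (d:ℤ) ^ 2 = D ^ 2 := by
          rw [hddef, sq, sq]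
          exact Int.natAbs_mul_self' D
        have hxpos : 0 < x := by omega
        have hypos : 0 < y := by omega
        have hDz : D ≠ 0 := by
          intro h
          rw [h] at hiso
          simp at hiso
          rcases hiso with h' | h' <;> omega
        have hdpos : 0 < d := by
          rw [hddef]
          exact Int.natAbs_pos.mpr hDz
        have hxy : x * y = n * d ^ 2 := by
          have : ((x * y : ℕ) : ℤ) = ((n * d ^ 2 : ℕ) : ℤ) := by
            push_cast
            rw [hxR, hyA, hdD, hiso]
          exact_mod_cast this
        have hcop : Nat.Coprime x y := by
          have hg : ((Nat.gcd x y : ℕ) : ℤ) ∣ 1 := by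
            have h1 : ((Nat.gcd x y : ℕ) : ℤ) ∣ R := hxR ▸ Int.natCast_dvd_natCast.mpr (Nat.gcd_dvd_left x y)
            have h2 : ((Nat.gcd x y : ℕ) : ℤ) ∣ A := hyA ▸ Int.natCast_dvd_natCast.mpr (Nat.gcd_dvd_right x y)
            have h3 : ((Nat.gcd x y : ℕ) : ℤ) ∣ A - (ℓ:ℤ) * R := dvd_sub h2 (Dvd.dvd.mul_left h1 _)
            rcases hE with h | h
            · rwa [h] at h3
            · rw [h] at h3; exact (dvd_neg.mp h3)
          have h4 : Nat.gcd x y ∣ 1 := by exact_mod_cast hg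
          exact Nat.dvd_one.mp h4
        obtain ⟨u, w, r, s, hrpos, hspos, hrs, hxu, hyw, huw⟩ :=
          key_nt x y d n hn hxpos hdpos hcop hxy
        set b : ℤ := if 0 < D then -(w:ℤ) else (w:ℤ) with hbdef
        have hab : (u:ℤ) * b = -D := by
          have habs : (u:ℤ) * (w:ℤ) = |D| := by
            have h1 : ((u * w : ℕ) : ℤ) = ((d : ℕ) : ℤ) := by exact_mod_cast huw
            rw [hddef] at h1
            push_cast at h1
            exact h1
          rcases lt_trichotomy D 0 with hD | hD | hD
          · rw [hbdef, if_neg (by omega)]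
            rw [abs_of_neg hD] at habs
            linarith
          · exact absurd hD hDz
          · rw [hbdef, if_pos hD]
            rw [abs_of_pos hD] at habs
            linarith
        have hb2 : b ^ 2 = (w:ℤ) ^ 2 := by
          rcases le_or_gt D 0 with h | h
          · rw [hbdef, if_neg (by omega)]
          · rw [hbdef, if_pos h]; ring
        set p : ℝ := ((u:ℕ):ℝ) * Real.sqrt r with hpdef
        set q : ℝ := ((b:ℤ):ℝ) * Real.sqrt s with hqdef
        have hsqr : Real.sqrt r ^ 2 = (r:ℝ) := Real.sq_sqrt (by positivity)
        have hsqs : Real.sqrt s ^ 2 = (s:ℝ) := Real.sq_sqrt (by positivity)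
        have hp2 : p ^ 2 = (R:ℝ) := by
          rw [hpdef, mul_pow, hsqr, ← hxR]
          push_cast [hxu]
          ring
        have hq2 : q ^ 2 = (A:ℝ) := by
          rw [hqdef, mul_pow, hsqs, ← hyA]
          have : ((b:ℤ):ℝ) ^ 2 = ((w:ℕ):ℝ) ^ 2 := by exact_mod_cast hb2
          rw [this]
          push_cast [hyw]
          ring
        have hpq : p * q = -(D:ℝ) * Real.sqrt n := by
          have hsqrs : Real.sqrt r * Real.sqrt s = Real.sqrt n := by
            rw [← Real.sqrt_mul (by positivity)]
            norm_cast
            rw [hrs]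
          have : p * q = ((u:ℕ):ℝ) * ((b:ℤ):ℝ) * (Real.sqrt r * Real.sqrt s) := by
            rw [hpdef, hqdef]; ring
          rw [this, hsqrs]
          have : ((u:ℕ):ℝ) * ((b:ℤ):ℝ) = -(D:ℝ) := by exact_mod_cast hab
          rw [this]
        refine ⟨p, q, ⟨(u:ℤ), b, r, s, hrpos, hspos, hrs, ?_, ?_⟩, ?_, ?_, ?_, ?_, ?_, ?_⟩
        · ext i j
          fin_cases i <;> fin_cases j <;> simp [hpdef, hqdef] <;> push_cast <;> ring
        · have key : (((b:ℤ):ℝ) * Real.sqrt s) ^ 2 - (ℓ:ℝ) * ((((u:ℤ)):ℝ) * Real.sqrt r) ^ 2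
              = (A:ℝ) - (ℓ:ℝ) * (R:ℝ) := by
            have h1 : (((b:ℤ):ℝ) * Real.sqrt s) ^ 2 = (A:ℝ) := by
              rw [← hq2, hqdef]
            have h2 : ((((u:ℤ)):ℝ) * Real.sqrt r) ^ 2 = (R:ℝ) := by
              rw [← hp2, hpdef]; push_cast; ring
            rw [h1, h2]
          rcases hE with h | h
          · left; rw [key]; exact_mod_cast congrArg (fun z : ℤ => (z:ℝ)) h
          · right; rw [key]; exact_mod_cast congrArg (fun z : ℤ => (z:ℝ)) h
        · exact hp2.symm
        · rw [hpq]
          field_simp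
        · exact hq2.symm
        · rw [hR₁]; exact hq2.symm
        · rw [hD₁, hpq]
          push_cast
          field_simp
        · rw [hA₁, hp2]
          push_cast
          ring
  · rintro ⟨p, q, ⟨a, b, r, s, hrpos, hspos, hrs, hM, hsign⟩, h1, h2, h3, h4, h5, h6⟩
    have hq : q = (b:ℝ) * Real.sqrt s := by
      have := congrFun (congrFun hM 0) 0
      simpa using this
    have hp : p = (a:ℝ) * Real.sqrt r := by
      have := congrFun (congrFun hM 1) 0
      simpa using this
    have hsqr : Real.sqrt r ^ 2 = (r:ℝ) := Real.sq_sqrt (by positivity)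
    have hsqs : Real.sqrt s ^ 2 = (s:ℝ) := Real.sq_sqrt (by positivity)
    have hsqrs : Real.sqrt r * Real.sqrt s = Real.sqrt n := by
      rw [← Real.sqrt_mul (by positivity)]
      norm_cast
      rw [hrs]
    have hp2 : p ^ 2 = (a:ℝ) ^ 2 * (r:ℝ) := by rw [hp, mul_pow, hsqr]
    have hq2 : q ^ 2 = (b:ℝ) ^ 2 * (s:ℝ) := by rw [hq, mul_pow, hsqs]
    have hpq : p * q = (a:ℝ) * (b:ℝ) * Real.sqrt n := by
      rw [hp, hq, ← hsqrs]; ring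
    -- integer identifications
    have hR : R = a ^ 2 * r := by
      have : (R:ℝ) = ((a ^ 2 * (r:ℤ) : ℤ):ℝ) := by rw [h1, hp2]; push_cast; ring
      exact_mod_cast this
    have hD : D = -(a * b) := by
      have : (D:ℝ) = ((-(a*b) : ℤ):ℝ) := by
        rw [h2, hpq]
        push_cast
        field_simp
      exact_mod_cast this
    have hA : A = b ^ 2 * s := by
      have : (A:ℝ) = ((b ^ 2 * (s:ℤ) : ℤ):ℝ) := by rw [h3, hq2]; push_cast; ring
      exact_mod_cast this
    have hR₁ : R₁ = b ^ 2 * s := by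
      have : (R₁:ℝ) = ((b ^ 2 * (s:ℤ) : ℤ):ℝ) := by rw [h4, hq2]; push_cast; ring
      exact_mod_cast this
    have hD₁ : D₁ = -((ℓ:ℤ) * (a * b)) := by
      have : (D₁:ℝ) = ((-((ℓ:ℤ)*(a*b)) : ℤ):ℝ) := by
        rw [h5, hpq]
        push_cast
        field_simp
      exact_mod_cast this
    have hA₁ : A₁ = (ℓ:ℤ) ^ 2 * (a ^ 2 * r) := by
      have : (A₁:ℝ) = (((ℓ:ℤ) ^ 2 * (a ^ 2 * (r:ℤ)) : ℤ):ℝ) := by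
        rw [h6, hp2]; push_cast; ring
      exact_mod_cast this
    have hrsZ : (r:ℤ) * (s:ℤ) = (n:ℤ) := by exact_mod_cast hrs
    -- sign condition as integers
    have e0 : ((b:ℝ) * Real.sqrt s) ^ 2 - (ℓ:ℝ) * ((a:ℝ) * Real.sqrt r) ^ 2
        = (b:ℝ) ^ 2 * (s:ℝ) - (ℓ:ℝ) * ((a:ℝ) ^ 2 * (r:ℝ)) := by
      rw [mul_pow, mul_pow, hsqr, hsqs]
    have hsignZ : b ^ 2 * (s:ℤ) - (ℓ:ℤ) * (a ^ 2 * (r:ℤ)) = 1 ∨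
        b ^ 2 * (s:ℤ) - (ℓ:ℤ) * (a ^ 2 * (r:ℤ)) = -1 := by
      rcases hsign with h | h
      · left
        have h' : ((b ^ 2 * (s:ℤ) - (ℓ:ℤ) * (a ^ 2 * (r:ℤ)) : ℤ):ℝ) = 1 := by
          push_cast
          rw [← e0]; exact h
        exact_mod_cast h'
      · right
        have h' : ((b ^ 2 * (s:ℤ) - (ℓ:ℤ) * (a ^ 2 * (r:ℤ)) : ℤ):ℝ) = -1 := by
          push_cast
          rw [← e0]; exact h
        exact_mod_cast h'
    have hsq : (b ^ 2 * (s:ℤ) - (ℓ:ℤ) * (a ^ 2 * (r:ℤ))) ^ 2 = 1 := by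
      rcases hsignZ with h | h <;> rw [h] <;> ring
    have hrZ : (0:ℤ) < (r:ℤ) := by exact_mod_cast hrpos
    have hsZ : (0:ℤ) < (s:ℤ) := by exact_mod_cast hspos
    refine ⟨?_, ?_, ?_, ?_, ?_, ?_⟩
    · -- MukaiPos w₀
      simp only [MukaiPos]
      rcases eq_or_ne a 0 with ha | ha
      · right; right
        have hnn : 0 ≤ b ^ 2 * (s:ℤ) := by positivity
        have hb1 : b ^ 2 * (s:ℤ) = 1 := by
          rcases hsignZ with h | h
          · rw [ha] at h; simpa using h
          · exfalso; rw [ha] at h; simp at h; omega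
        refine ⟨by rw [hR, ha]; ring, by rw [hD, ha]; ring, by rw [hA, hb1]; norm_num⟩
      · left
        rw [hR]
        have h2 : 0 < a ^ 2 := by positivity
        exact mul_pos h2 hrZ
    · -- MukaiPos w₁
      simp only [MukaiPos]
      rcases eq_or_ne b 0 with hb | hb
      · right; right
        have hnn : 0 ≤ (ℓ:ℤ) * (a ^ 2 * (r:ℤ)) := by positivity
        have ha1 : (ℓ:ℤ) * (a ^ 2 * (r:ℤ)) = 1 := by
          rcases hsignZ with h | h
          · exfalso; rw [hb] at h; simp at h; omega
          · rw [hb] at h; simp at h; linarith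
        refine ⟨by rw [hR₁, hb]; ring, by rw [hD₁, hb]; ring, ?_⟩
        rw [hA₁]
        nlinarith [ha1, hlZ]
      · left
        rw [hR₁]
        have h2 : 0 < b ^ 2 := by positivity
        exact mul_pos h2 hsZ
    · -- isotropic w₀
      simp only [MukaiIsotropic, mukaiPairing]
      rw [hR, hD, hA]
      linear_combination (-(2:ℤ) * a ^ 2 * b ^ 2) * hrsZ
    · -- isotropic w₁
      simp only [MukaiIsotropic, mukaiPairing]
      rw [hR₁, hD₁, hA₁]
      linear_combination (-(2:ℤ) * (ℓ:ℤ) ^ 2 * a ^ 2 * b ^ 2) * hrsZ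
    · -- pairing = -1
      simp only [mukaiPairing]
      rw [hR, hD, hA, hR₁, hD₁, hA₁]
      linear_combination (-(2:ℤ) * (ℓ:ℤ) * a ^ 2 * b ^ 2) * hrsZ - hsq
    · -- the ± vector equation
      rcases hsignZ with h | h
      · right
        simp only [Prod.smul_mk, smul_eq_mul, Prod.mk_sub_mk, Prod.neg_mk, Prod.mk.injEq]
        refine ⟨?_, ?_, ?_⟩
        · linear_combination (ℓ:ℤ) * hR - hR₁ - h
        · linear_combination (ℓ:ℤ) * hD - hD₁
        · linear_combination (ℓ:ℤ) * hA - hA₁ + (ℓ:ℤ) * h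
      · left
        simp only [Prod.smul_mk, smul_eq_mul, Prod.mk_sub_mk, Prod.mk.injEq]
        refine ⟨?_, ?_, ?_⟩
        · linear_combination -(ℓ:ℤ) * hR + hR₁ + h
        · linear_combination hD₁ - (ℓ:ℤ) * hD
        · linear_combination -(ℓ:ℤ) * hA + hA₁ - (ℓ:ℤ) * h
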